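/- Let d ≥ 2, n ≥ 2, and f be integers with 1 ≤ f ≤ d^{n−2}, and set r = ⌊log_d f⌋. Let a be a d-ary string of length n and let B be a nonempty finite set of d-ary strings of length n with |B| ≤ f. Let S be a finite set of pairs (u,v) of d-ary strings of length n such that: (i) u ≠ a and v ∉ B for every (u,v) ∈ S; (ii) distinct elements of S have distinct first components and distinct second components; and (iii) every (u,v) ∈ S satisfies suf(u_{1..n−1}, a_{1..n−1}) + pre(v_{1..n−1}, b_{1..n−1}) ≥ n for some b ∈ B. Then |S| ≤ d^{⌊(n+r)/2⌋} + f·( d^{⌈(n−r−2)/2⌉} − 1 ) − 1. -/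

import Mathlib

/-- Length of the longest common prefix of the `(n-1)`-prefixes `s₁⋯s_{n-1}` and
`s'₁⋯s'_{n-1}` of two `d`-ary strings of length `n`: the largest `p ≤ n-1` such
that `s i = s' i` for all (0-indexed) `i < p`. -/
def strPre (d n : ℕ) (s s' : Fin n → Fin d) : ℕ :=
  ((Finset.range n).filter (fun p => ∀ i : Fin n, (i : ℕ) < p → s i = s' i)).sup id

/-- Length of the longest common suffix of the `(n-1)`-prefixes `s₁⋯s_{n-1}` and
`s'₁⋯s'_{n-1}` of two `d`-ary strings of length `n`: the largest `q ≤ n-1` such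
that `s i = s' i` for all (0-indexed) `i` with `n-1-q ≤ i < n-1`. -/
def strSuf (d n : ℕ) (s s' : Fin n → Fin d) : ℕ :=
  ((Finset.range n).filter
    (fun q => ∀ i : Fin n, n - 1 - q ≤ (i : ℕ) → (i : ℕ) < n - 1 → s i = s' i)).sup id

lemma strPre_spec {d n : ℕ} (hn : 1 ≤ n) (s s' : Fin n → Fin d) :
    ∀ i : Fin n, (i : ℕ) < strPre d n s s' → s i = s' i := by
  have hne : (((Finset.range n).filter
      (fun p => ∀ i : Fin n, (i : ℕ) < p → s i = s' i))).Nonempty := by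
    refine ⟨0, ?_⟩
    simp only [Finset.mem_filter, Finset.mem_range]
    exact ⟨hn, fun i h => absurd h (Nat.not_lt_zero _)⟩
  obtain ⟨q, hq, hq2⟩ := Finset.exists_mem_eq_sup _ hne id
  intro i hi
  rw [strPre, hq2] at hi
  exact (Finset.mem_filter.mp hq).2 i hi

lemma strSuf_spec {d n : ℕ} (hn : 1 ≤ n) (s s' : Fin n → Fin d) :
    ∀ i : Fin n, n - 1 - strSuf d n s s' ≤ (i : ℕ) → (i : ℕ) < n - 1 → s i = s' i := by
  have hne : (((Finset.range n).filter
      (fun q => ∀ i : Fin n, n - 1 - q ≤ (i : ℕ) → (i : ℕ) < n - 1 → s i = s' i))).Nonempty := by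
    refine ⟨0, ?_⟩
    simp only [Finset.mem_filter, Finset.mem_range]
    exact ⟨hn, fun i h1 h2 => absurd h2 (by omega)⟩
  obtain ⟨q, hq, hq2⟩ := Finset.exists_mem_eq_sup _ hne id
  intro i hi1 hi2
  rw [strSuf, hq2] at hi1
  exact (Finset.mem_filter.mp hq).2 i hi1 hi2

lemma count_pre (d n k : ℕ) (hk : k + 1 ≤ n) (b : Fin n → Fin d) :
    (Finset.univ.filter (fun v : Fin n → Fin d =>
        v ≠ b ∧ ∀ i : Fin n, (i : ℕ) < k + 1 → v i = b i)).card
      ≤ d ^ (n - k - 1) - 1 := by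
  classical
  set m := n - k - 1 with hm
  let e : Fin m → Fin n := fun j => ⟨k + 1 + (j : ℕ), by omega⟩
  let φ : (Fin n → Fin d) → (Fin m → Fin d) := fun v j => v (e j)
  have key : ∀ v, (∀ i : Fin n, (i : ℕ) < k + 1 → v i = b i) →
      ∀ v', (∀ i : Fin n, (i : ℕ) < k + 1 → v' i = b i) → φ v = φ v' → v = v' := by
    intro v hv v' hv' h
    funext i
    by_cases hi : (i : ℕ) < k + 1
    · rw [hv i hi, hv' i hi]
    · have hj : (i : ℕ) - (k + 1) < m := by omega
      have he : e ⟨(i : ℕ) - (k + 1), hj⟩ = i := by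
        apply Fin.ext; simp only [e]; omega
      have := congrFun h ⟨(i : ℕ) - (k + 1), hj⟩
      simpa only [φ, he] using this
  have hsub : (Finset.univ.filter (fun v : Fin n → Fin d =>
      v ≠ b ∧ ∀ i : Fin n, (i : ℕ) < k + 1 → v i = b i)).card
      ≤ (Finset.univ.erase (φ b)).card := by
    apply Finset.card_le_card_of_injOn φ
    · intro v hv
      simp only [Finset.coe_filter, Set.mem_setOf_eq, Finset.mem_coe] at hv ⊢
      refine Finset.mem_erase.mpr ⟨?_, Finset.mem_univ _⟩
      intro hcon
      exact hv.2.1 (key v hv.2.2 b (fun i _ => rfl) hcon)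
    · intro v hv v' hv' h
      rw [Finset.coe_filter, Set.mem_setOf_eq] at hv hv'
      exact key v hv.2.2 v' hv'.2.2 h
  calc _ ≤ (Finset.univ.erase (φ b)).card := hsub
    _ = d ^ m - 1 := by
        rw [Finset.card_erase_of_mem (Finset.mem_univ _), Finset.card_univ]
        simp [Fintype.card_fun]

lemma count_suf (d n m : ℕ) (hm2 : m + 2 ≤ n) (a : Fin n → Fin d) :
    (Finset.univ.filter (fun u : Fin n → Fin d =>
        u ≠ a ∧ ∀ i : Fin n, n - m - 2 ≤ (i : ℕ) → (i : ℕ) < n - 1 → u i = a i)).card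
      ≤ d ^ (n - m - 1) - 1 := by
  classical
  set c := n - m - 2 with hc
  have hcn : c + 1 = n - m - 1 := by omega
  let e : Fin (c + 1) → Fin n := fun j =>
    if h : (j : ℕ) < c then ⟨(j : ℕ), by omega⟩ else ⟨n - 1, by omega⟩
  let φ : (Fin n → Fin d) → (Fin (c + 1) → Fin d) := fun u j => u (e j)
  have key : ∀ u, (∀ i : Fin n, n - m - 2 ≤ (i : ℕ) → (i : ℕ) < n - 1 → u i = a i) →
      ∀ u', (∀ i : Fin n, n - m - 2 ≤ (i : ℕ) → (i : ℕ) < n - 1 → u' i = a i) →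
      φ u = φ u' → u = u' := by
    intro u hu u' hu' h
    funext i
    rcases lt_or_ge (i : ℕ) c with hi | hi
    · have hj : (i : ℕ) < c + 1 := by omega
      have he : e ⟨(i : ℕ), hj⟩ = i := by
        simp only [e, dif_pos hi]
      have := congrFun h ⟨(i : ℕ), hj⟩
      simpa only [φ, he] using this
    · rcases lt_or_ge (i : ℕ) (n - 1) with hi2 | hi2
      · rw [hu i (by omega) hi2, hu' i (by omega) hi2]
      · have hieq : (i : ℕ) = n - 1 := by omega
        have he : e ⟨c, by omega⟩ = i := by
          simp only [e, dif_neg (lt_irrefl c)]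
          exact Fin.ext hieq.symm
        have := congrFun h ⟨c, by omega⟩
        simpa only [φ, he] using this
  have hsub : (Finset.univ.filter (fun u : Fin n → Fin d =>
      u ≠ a ∧ ∀ i : Fin n, n - m - 2 ≤ (i : ℕ) → (i : ℕ) < n - 1 → u i = a i)).card
      ≤ (Finset.univ.erase (φ a)).card := by
    apply Finset.card_le_card_of_injOn φ
    · intro u hu
      simp only [Finset.coe_filter, Set.mem_setOf_eq, Finset.mem_coe] at hu ⊢
      refine Finset.mem_erase.mpr ⟨?_, Finset.mem_univ _⟩
      intro hcon
      exact hu.2.1 (key u hu.2.2 a (fun i _ _ => rfl) hcon)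
    · intro u hu u' hu' h
      rw [Finset.coe_filter, Set.mem_setOf_eq] at hu hu'
      exact key u hu.2.2 u' hu'.2.2 h
  calc _ ≤ (Finset.univ.erase (φ a)).card := hsub
    _ = d ^ (n - m - 1) - 1 := by
        rw [Finset.card_erase_of_mem (Finset.mem_univ _), Finset.card_univ]
        simp [Fintype.card_fun, hcn]

/-- f-cast SNB bound for the window algorithm with `t = n` (Theorem III.2 in
Wang et al., ICC 2008), case `f ≤ d^{n-2}`, with `r = ⌊log_d f⌋`: a set `S` of
pairs link-blocking the multicast request `(a, B)` (`|B| ≤ f`), with pairwise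
distinct first and second components, has cardinality at most
`d^{⌊(n+r)/2⌋} + f (d^{⌈(n-r-2)/2⌉} - 1) - 1`
(here `⌈(n-r-2)/2⌉ = (n - r - 1)/2` in natural-number arithmetic). -/
theorem stmt_14 (d n f : ℕ) (hd : 2 ≤ d) (hn : 2 ≤ n)
    (hf1 : 1 ≤ f) (hf2 : f ≤ d ^ (n - 2)) (a : Fin n → Fin d)
    (B : Finset (Fin n → Fin d)) (hBne : B.Nonempty) (hBf : B.card ≤ f)
    (S : Finset ((Fin n → Fin d) × (Fin n → Fin d)))
    (h1 : ∀ p ∈ S, p.1 ≠ a ∧ p.2 ∉ B)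
    (h2 : ∀ p ∈ S, ∀ q ∈ S, p ≠ q → p.1 ≠ q.1 ∧ p.2 ≠ q.2)
    (h3 : ∀ p ∈ S, ∃ b ∈ B, n ≤ strSuf d n p.1 a + strPre d n p.2 b) :
    S.card ≤ d ^ ((n + Nat.log d f) / 2)
        + f * (d ^ ((n - Nat.log d f - 1) / 2) - 1) - 1 := by
  classical
  set r := Nat.log d f with hrdef
  have hrn : r ≤ n - 2 := by
    have h := Nat.log_mono_right (b := d) hf2
    rwa [Nat.log_pow (by omega : 1 < d)] at h
  set k := (n + r) / 2 with hkdef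
  set m := (n - r - 1) / 2 with hmdef
  have hkm : k + m = n - 1 := by omega
  have hm2 : m + 2 ≤ n := by omega
  have hk1 : k + 1 ≤ n := by omega
  have hnmk : n - m - 1 = k := by omega
  have hnkm : n - k - 1 = m := by omega
  set P := fun p : (Fin n → Fin d) × (Fin n → Fin d) => m + 1 ≤ strSuf d n p.1 a with hP
  have hsplit := Finset.card_filter_add_card_filter_not (s := S) (p := P)
  -- Bound the first part
  have hb1 : (S.filter P).card ≤ d ^ k - 1 := by
    have hinj : (S.filter P).card ≤ (Finset.univ.filter (fun u : Fin n → Fin d =>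
        u ≠ a ∧ ∀ i : Fin n, n - m - 2 ≤ (i : ℕ) → (i : ℕ) < n - 1 → u i = a i)).card := by
      apply Finset.card_le_card_of_injOn Prod.fst
      · intro p hp
        rw [Finset.coe_filter, Set.mem_setOf_eq] at hp
        rw [Finset.mem_coe, Finset.mem_filter]
        refine ⟨Finset.mem_univ _, (h1 p hp.1).1, ?_⟩
        intro i hi1 hi2
        have hs := hp.2
        apply strSuf_spec (by omega) p.1 a i ?_ hi2
        have : m + 1 ≤ strSuf d n p.1 a := hs
        omega
      · intro p hp q hq h
        rw [Finset.coe_filter, Set.mem_setOf_eq] at hp hq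
        by_contra hne
        exact (h2 p hp.1 q hq.1 hne).1 h
    calc (S.filter P).card ≤ _ := hinj
      _ ≤ d ^ (n - m - 1) - 1 := count_suf d n m hm2 a
      _ = d ^ k - 1 := by rw [hnmk]
  -- Bound the second part
  have hb2 : (S.filter (fun p => ¬ P p)).card ≤ f * (d ^ m - 1) := by
    set T := B.biUnion (fun b => Finset.univ.filter (fun v : Fin n → Fin d =>
        v ≠ b ∧ ∀ i : Fin n, (i : ℕ) < k + 1 → v i = b i)) with hT
    have hinj : (S.filter (fun p => ¬ P p)).card ≤ T.card := by
      apply Finset.card_le_card_of_injOn Prod.snd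
      · intro p hp
        rw [Finset.coe_filter, Set.mem_setOf_eq] at hp
        obtain ⟨b, hb, hnb⟩ := h3 p hp.1
        have hsuf : strSuf d n p.1 a ≤ m := by
          have := hp.2
          simp only [P, not_le] at this
          omega
        have hpre : k + 1 ≤ strPre d n p.2 b := by omega
        rw [hT, Finset.mem_coe, Finset.mem_biUnion]
        refine ⟨b, hb, ?_⟩
        rw [Finset.mem_filter]
        refine ⟨Finset.mem_univ _, ?_, ?_⟩
        · intro hcon
          exact (h1 p hp.1).2 (hcon ▸ hb)
        · intro i hi
          exact strPre_spec (by omega) p.2 b i (by omega)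
      · intro p hp q hq h
        rw [Finset.coe_filter, Set.mem_setOf_eq] at hp hq
        by_contra hne
        exact (h2 p hp.1 q hq.1 hne).2 h
    have hTcard : T.card ≤ B.card * (d ^ m - 1) := by
      calc T.card ≤ ∑ b ∈ B, (Finset.univ.filter (fun v : Fin n → Fin d =>
            v ≠ b ∧ ∀ i : Fin n, (i : ℕ) < k + 1 → v i = b i)).card :=
          Finset.card_biUnion_le
        _ ≤ ∑ _b ∈ B, (d ^ m - 1) := by
            apply Finset.sum_le_sum
            intro b hb
            have := count_pre d n k hk1 b
            rwa [hnkm] at this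
        _ = B.card * (d ^ m - 1) := by rw [Finset.sum_const, smul_eq_mul]
    calc (S.filter (fun p => ¬ P p)).card ≤ T.card := hinj
      _ ≤ B.card * (d ^ m - 1) := hTcard
      _ ≤ f * (d ^ m - 1) := Nat.mul_le_mul_right _ hBf
  have hdk : 1 ≤ d ^ k := Nat.one_le_pow _ _ (by omega)
  omega
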